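/- For every ρ, μ ∈ ℝ and σ > 0, if Y is distributed according to the Gaussian measure N(μ, σ²), then the expected improvement satisfies E[max(0, ρ − Y)] = (ρ − μ)·Φ(z) + σ·φ(z), where z = (ρ − μ)/σ. -/

import Mathlib

open MeasureTheory ProbabilityTheory Real Set Filter
open scoped NNReal ENNReal

/-- The standard normal probability density function. -/
noncomputable def stdNormalPDF (z : ℝ) : ℝ := Real.exp (-z ^ 2 / 2) / Real.sqrt (2 * Real.pi)

/-- The standard normal cumulative distribution function. -/
noncomputable def stdNormalCDF (z : ℝ) : ℝ := ∫ t in Set.Iic z, stdNormalPDF t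

lemma stdNormalPDF_eq (z : ℝ) : stdNormalPDF z = gaussianPDFReal 0 1 z := by
  simp [stdNormalPDF, gaussianPDFReal, div_eq_inv_mul, mul_comm]

lemma stdNormalPDF_nonneg (z : ℝ) : 0 ≤ stdNormalPDF z := by
  have := Real.sqrt_nonneg (2 * Real.pi)
  exact div_nonneg (Real.exp_pos _).le this

lemma integrable_stdNormalPDF : Integrable stdNormalPDF := by
  have h := integrable_gaussianPDFReal 0 1
  exact h.congr (Filter.Eventually.of_forall fun z => (stdNormalPDF_eq z).symm)

lemma integrable_mul_stdNormalPDF : Integrable (fun z : ℝ => z * stdNormalPDF z) := by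
  have h := (integrable_mul_exp_neg_mul_sq (b := (1:ℝ)/2) (by norm_num)).mul_const
    (Real.sqrt (2 * Real.pi))⁻¹
  refine h.congr (Filter.Eventually.of_forall fun x => ?_)
  show x * Real.exp (-(1/2) * x ^ 2) * (Real.sqrt (2 * Real.pi))⁻¹ = x * stdNormalPDF x
  have : stdNormalPDF x = Real.exp (-(1/2) * x ^ 2) * (Real.sqrt (2 * Real.pi))⁻¹ := by
    rw [stdNormalPDF, div_eq_mul_inv]
    congr 2
    ring
  rw [this, mul_assoc]

lemma hasDerivAt_neg_stdNormalPDF (z : ℝ) :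
    HasDerivAt (fun t => -stdNormalPDF t) (z * stdNormalPDF z) z := by
  have h : HasDerivAt (fun t : ℝ => -t ^ 2 / 2) (-z) z := by
    have h0 := ((hasDerivAt_pow 2 z).neg).div_const 2
    norm_num at h0
    exact h0.congr_deriv (by ring)
  have h2 := (h.exp).div_const (Real.sqrt (2 * Real.pi))
  have h3 := h2.neg
  simp only [stdNormalPDF]
  have hval : z * (Real.exp (-z ^ 2 / 2) / Real.sqrt (2 * Real.pi)) =
      -(Real.exp (-z ^ 2 / 2) * -z / Real.sqrt (2 * Real.pi)) := by
    ring
  rw [hval]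
  exact h3

lemma tendsto_neg_stdNormalPDF_atBot :
    Tendsto (fun z : ℝ => -stdNormalPDF z) atBot (nhds 0) := by
  have hsq : Tendsto (fun z : ℝ => z ^ 2) atBot atTop := by
    have h := (tendsto_pow_atTop (α := ℝ) (n := 2) two_ne_zero).comp tendsto_neg_atBot_atTop
    refine h.congr fun z => ?_
    simp [Function.comp]
  have h1 : Tendsto (fun z : ℝ => -z ^ 2 / 2) atBot atBot := by
    have ha : Tendsto (fun z : ℝ => -z ^ 2) atBot atBot := by
      have := tendsto_neg_atTop_atBot.comp hsq
      refine this.congr fun z => rfl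
    exact ha.atBot_div_const (by norm_num)
  have h2 := Real.tendsto_exp_atBot.comp h1
  have h3 : Tendsto (fun z : ℝ => stdNormalPDF z) atBot (nhds 0) := by
    have := h2.div_const (Real.sqrt (2 * Real.pi))
    simpa [stdNormalPDF, Function.comp] using this
  simpa using h3.neg

lemma integral_Iic_mul_stdNormalPDF (c : ℝ) :
    ∫ z in Set.Iic c, z * stdNormalPDF z = -stdNormalPDF c := by
  have h := integral_Iic_of_hasDerivAt_of_tendsto' (f := fun t => -stdNormalPDF t)
    (f' := fun z => z * stdNormalPDF z) (a := c) (m := 0)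
    (fun x _ => hasDerivAt_neg_stdNormalPDF x)
    integrable_mul_stdNormalPDF.integrableOn tendsto_neg_stdNormalPDF_atBot
  simpa using h

lemma integral_max_std (c : ℝ) :
    ∫ z, max 0 (c - z) * stdNormalPDF z = c * stdNormalCDF c + stdNormalPDF c := by
  have hind : (fun z => max 0 (c - z) * stdNormalPDF z) =
      Set.indicator (Set.Iic c) (fun z => (c - z) * stdNormalPDF z) := by
    funext z
    by_cases h : z ≤ c
    · rw [Set.indicator_of_mem (Set.mem_Iic.mpr h), max_eq_right (by linarith)]
    · rw [Set.indicator_of_notMem (by simpa using h), max_eq_left (by push_neg at h; linarith), zero_mul]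
  rw [hind, integral_indicator measurableSet_Iic]
  have h1 : IntegrableOn (fun z : ℝ => c * stdNormalPDF z) (Set.Iic c) :=
    (integrable_stdNormalPDF.const_mul c).integrableOn
  have h2 : IntegrableOn (fun z : ℝ => z * stdNormalPDF z) (Set.Iic c) :=
    integrable_mul_stdNormalPDF.integrableOn
  have : ∫ z in Set.Iic c, (c - z) * stdNormalPDF z =
      (∫ z in Set.Iic c, c * stdNormalPDF z) - ∫ z in Set.Iic c, z * stdNormalPDF z := by
    rw [← integral_sub h1 h2]
    congr 1
    funext z
    ring
  rw [this, integral_Iic_mul_stdNormalPDF, integral_const_mul]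
  rw [stdNormalCDF]
  ring

/-- For every ρ, μ ∈ ℝ and σ > 0, if `Y ~ N(μ, σ²)` then the expected improvement satisfies
`E[max 0 (ρ - Y)] = (ρ - μ)·Φ(z) + σ·φ(z)` where `z = (ρ - μ)/σ`. -/
theorem expected_improvement_gaussian (ρ μ σ : ℝ) (hσ : 0 < σ) :
    ∫ y, max 0 (ρ - y) ∂(gaussianReal μ (Real.toNNReal (σ ^ 2))) =
      (ρ - μ) * stdNormalCDF ((ρ - μ) / σ) + σ * stdNormalPDF ((ρ - μ) / σ) := by
  have hσ' : σ ≠ 0 := hσ.ne'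
  set c : ℝ := (ρ - μ) / σ with hc
  have hmap : gaussianReal μ (Real.toNNReal (σ ^ 2)) =
      Measure.map (fun z => σ * z + μ) (gaussianReal 0 1) := by
    have h1 : (gaussianReal 0 1).map (σ * ·) =
        gaussianReal 0 (Real.toNNReal (σ ^ 2)) := by
      rw [gaussianReal_map_const_mul]
      congr 1
      · simp
      · ext
        simp [Real.coe_toNNReal _ (sq_nonneg σ)]
    rw [show (fun z => σ * z + μ) = ((· + μ) ∘ (σ * ·)) from rfl,
      ← Measure.map_map (by fun_prop) (by fun_prop), h1, gaussianReal_map_add_const]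
    simp
  have hcont : Continuous (fun y : ℝ => max 0 (ρ - y)) :=
    continuous_const.max (continuous_const.sub continuous_id)
  rw [hmap, integral_map (by fun_prop) hcont.aestronglyMeasurable]
  have hstd : gaussianReal 0 1 =
      volume.withDensity (fun z => ((Real.toNNReal (stdNormalPDF z) : ℝ≥0) : ℝ≥0∞)) := by
    rw [gaussianReal_of_var_ne_zero _ one_ne_zero]
    congr 1
    funext z
    rw [gaussianPDF, ← stdNormalPDF_eq]
    rfl
  have hmeas : Measurable (fun z => Real.toNNReal (stdNormalPDF z)) := by
    apply Measurable.real_toNNReal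
    have : Continuous stdNormalPDF := by
      unfold stdNormalPDF
      continuity
    exact this.measurable
  rw [hstd, integral_withDensity_eq_integral_smul hmeas]
  have key : ∀ z : ℝ, (Real.toNNReal (stdNormalPDF z)) • max 0 (ρ - (σ * z + μ)) =
      σ * (max 0 (c - z) * stdNormalPDF z) := by
    intro z
    rw [NNReal.smul_def, Real.coe_toNNReal _ (stdNormalPDF_nonneg z)]
    have h1 : ρ - (σ * z + μ) = σ * (c - z) := by
      rw [hc]
      field_simp
      ring
    have h2 : max (0:ℝ) (σ * (c - z)) = σ * max 0 (c - z) := by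
      rw [mul_max_of_nonneg _ _ hσ.le, mul_zero]
    rw [h1, h2, smul_eq_mul]
    ring
  simp_rw [key]
  rw [integral_const_mul, integral_max_std]
  have : σ * c = ρ - μ := by
    rw [hc]
    field_simp
  rw [mul_add, ← mul_assoc, this]
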